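/- Let T ⊆ {0,1}^m be a 3-wise intersecting family with |T| = 2^(m-1) that is not a star. Then for every 0 ≤ k ≤ m-1 and every δ ∈ {0,1}^k, the number of words in T whose first k coordinates equal δ is exactly 2^(m-k-1). -/

import Mathlib

open Finset



lemma cube_card (m k : ℕ) (hk : k ≤ m) (δ : ℕ → Bool) :
    ((univ : Finset (Fin m → Bool)).filter
      (fun x => ∀ i : Fin m, (i : ℕ) < k → x i = δ i)).card = 2 ^ (m - k) := by
  classical
  have h2 : (2:ℕ) ^ (m-k) = (univ : Finset (Fin (m-k) → Bool)).card := by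
    simp [Finset.card_univ]
  rw [h2]
  apply Finset.card_nbij'
    (i := fun (x : Fin m → Bool) => fun j : Fin (m-k) => x ⟨k + j.val, by omega⟩)
    (j := fun (g : Fin (m-k) → Bool) =>
      fun i : Fin m => if h : (i:ℕ) < k then δ i else g ⟨i.val - k, by omega⟩)
  · intro a _; exact mem_univ _
  · intro g _
    simp only [mem_coe, mem_filter, mem_univ, true_and]
    intro i hi
    rw [dif_pos hi]
  · intro x hx
    simp only [mem_coe, mem_filter, mem_univ, true_and] at hx
    funext i
    beta_reduce
    by_cases h : (i:ℕ) < k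
    · rw [dif_pos h]; exact (hx i h).symm
    · rw [dif_neg h]
      show x ⟨k + (i.val - k), _⟩ = x i
      congr 1
      apply Fin.ext
      simp
      omega
  · intro g _
    funext j
    have hn : ¬ (k + j.val < k) := by omega
    show (if h : k + j.val < k then δ (k + j.val) else g ⟨k + j.val - k, _⟩) = g j
    rw [dif_neg hn]
    congr 1
    apply Fin.ext
    simp


lemma star_card (m : ℕ) (hm : 1 ≤ m) (j : Fin m) (b : Bool) :
    ((univ : Finset (Fin m → Bool)).filter (fun x => x j = b)).card = 2 ^ (m - 1) := by
  classical
  have hcard : ((univ : Finset (Fin m → Bool)).filter (fun x => x j = b)).card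
      = ((univ : Finset (Fin m → Bool)).filter (fun x => x j = !b)).card := by
    apply Finset.card_nbij' (i := fun x => fun i => if i = j then !(x i) else x i)
      (j := fun x => fun i => if i = j then !(x i) else x i)
    · intro x hx
      simp only [mem_coe, mem_filter, mem_univ, true_and] at *
      simp [hx]
    · intro x hx
      simp only [mem_coe, mem_filter, mem_univ, true_and] at *
      simp [hx]
    · intro x _; funext i; by_cases h : i = j <;> simp [h]
    · intro x _; funext i; by_cases h : i = j <;> simp [h]
  have hdisj : Disjoint ((univ : Finset (Fin m → Bool)).filter (fun x => x j = b))
      ((univ : Finset (Fin m → Bool)).filter (fun x => x j = !b)) := by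
    rw [Finset.disjoint_left]
    intro x h1 h2
    simp only [mem_filter, mem_univ, true_and] at h1 h2
    rw [h1] at h2
    simp at h2
  have hunion : ((univ : Finset (Fin m → Bool)).filter (fun x => x j = b)) ∪
      ((univ : Finset (Fin m → Bool)).filter (fun x => x j = !b)) = univ := by
    ext x
    simp only [mem_union, mem_filter, mem_univ, true_and, iff_true]
    cases hxj : x j <;> cases b <;> simp
  have htot : ((univ : Finset (Fin m → Bool)).filter (fun x => x j = b)).card +
      ((univ : Finset (Fin m → Bool)).filter (fun x => x j = !b)).card = 2 ^ m := by
    rw [← Finset.card_union_of_disjoint hdisj, hunion, Finset.card_univ]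
    simp
  have hpow : (2:ℕ) ^ m = 2 ^ (m-1) + 2 ^ (m-1) := by
    conv_lhs => rw [← Nat.sub_add_cancel hm]
    rw [pow_succ, mul_two]
  rw [hpow, hcard] at htot
  rw [hcard]
  apply Nat.eq_of_mul_eq_mul_left (show 0 < 2 by norm_num)
  rw [two_mul, two_mul]
  exact htot

lemma no_compl_pair (m : ℕ) (T : Finset (Fin m → Bool))
    (hT : ∀ x ∈ T, ∀ y ∈ T, ∀ z ∈ T, ∃ j : Fin m, x j = y j ∧ y j = z j) :
    ∀ x ∈ T, (fun i => !(x i)) ∉ T := by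
  intro x hx hxc
  obtain ⟨j, _, h2⟩ := hT x hx x hx _ hxc
  simp at h2

lemma compl_in (m : ℕ) (hm : 1 ≤ m) (T : Finset (Fin m → Bool))
    (hT : ∀ x ∈ T, ∀ y ∈ T, ∀ z ∈ T, ∃ j : Fin m, x j = y j ∧ y j = z j)
    (hmax : T.card = 2 ^ (m - 1)) (x : Fin m → Bool) (hx : x ∉ T) :
    (fun i => !(x i)) ∈ T := by
  classical
  have hinj : Function.Injective (fun (x : Fin m → Bool) => fun i => !(x i)) := by
    intro a b hab
    funext i
    have := congrFun hab i
    simpa using this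
  have hNcard : (T.image (fun x => fun i => !(x i))).card = 2 ^ (m-1) := by
    rw [Finset.card_image_of_injective _ hinj, hmax]
  have hdisj : Disjoint T (T.image (fun x => fun i => !(x i))) := by
    rw [Finset.disjoint_left]
    intro z hz1 hz2
    rw [Finset.mem_image] at hz2
    obtain ⟨y, hy, hyz⟩ := hz2
    apply no_compl_pair m T hT y hy
    rw [hyz]
    exact hz1
  have huniv : T ∪ T.image (fun x => fun i => !(x i)) = univ := by
    apply Finset.eq_univ_of_card
    rw [Finset.card_union_of_disjoint hdisj, hmax, hNcard]
    have h1 : Fintype.card (Fin m → Bool) = 2 ^ m := by simp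
    rw [h1]
    conv_rhs => rw [← Nat.sub_add_cancel hm]
    rw [pow_succ, mul_two]
  have hmem : x ∈ T ∪ T.image (fun x => fun i => !(x i)) := by
    rw [huniv]; exact mem_univ x
  rcases Finset.mem_union.mp hmem with h | h
  · exact absurd h hx
  · rw [Finset.mem_image] at h
    obtain ⟨y, hy, hyx⟩ := h
    have hxy : (fun i => !(x i)) = y := by
      funext i
      have := congrFun hyx i
      rw [← this]
      simp
    rw [hxy]; exact hy


lemma aux (m : ℕ) (hm : 1 ≤ m) (T : Finset (Fin m → Bool))
    (hT : ∀ x ∈ T, ∀ y ∈ T, ∀ z ∈ T, ∃ j : Fin m, x j = y j ∧ y j = z j)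
    (hmax : T.card = 2 ^ (m - 1))
    (hnotstar : ¬ ∃ (j : Fin m) (u : Bool),
      T = Finset.univ.filter (fun x : Fin m → Bool => x j = u)) :
    ∀ k : ℕ, k ≤ m - 1 → ∀ δ : ℕ → Bool,
      (T.filter (fun x => ∀ i : Fin m, (i:ℕ) < k → x i = δ i)).card = 2 ^ (m - k - 1) := by
  classical
  intro k
  induction k with
  | zero =>
    intro _ δ
    have he : T.filter (fun x => ∀ i : Fin m, (i:ℕ) < 0 → x i = δ i) = T := by
      apply Finset.filter_true_of_mem
      intro x _ i hi
      omega
    rw [he, hmax]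
    norm_num
  | succ k IH =>
    intro hk1 δ
    have hk : k ≤ m - 1 := by omega
    have hkm : k + 1 ≤ m := by omega
    have hklt : k < m := by omega
    -- key bound, for arbitrary prefix of length k+1
    have key : ∀ δ' : ℕ → Bool,
        2 * (T.filter (fun x => ∀ i : Fin m, (i:ℕ) < k+1 → x i = δ' i)).card
          ≤ 2 ^ (m - k - 1) := by
      intro δ'
      have hSC : T.filter (fun x => ∀ i : Fin m, (i:ℕ) < k+1 → x i = δ' i) ⊆
          (univ : Finset (Fin m → Bool)).filter
            (fun x => ∀ i : Fin m, (i:ℕ) < k+1 → x i = δ' i) := by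
        intro x hx
        simp only [mem_filter, mem_univ, true_and] at *
        exact hx.2
      have hCcard : ((univ : Finset (Fin m → Bool)).filter
          (fun x => ∀ i : Fin m, (i:ℕ) < k+1 → x i = δ' i)).card = 2 ^ (m - k - 1) := by
        rw [cube_card m (k+1) hkm δ']
        congr 1
      have hgood : ∀ x ∈ T, (∀ i : Fin m, (i:ℕ) < k+1 → x i = δ' i) →
          (fun i : Fin m => if (i:ℕ) < k+1 then x i else !(x i)) ∉ T := by
        intro x hxT hxp hσ
        -- Step A : no member of T has prefix !δ'
        have stepA : ∀ z ∈ T, ¬ (∀ i : Fin m, (i:ℕ) < k+1 → z i = !(δ' i)) := by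
          intro z hz hzp
          obtain ⟨j, h1, h2⟩ := hT z hz x hxT _ hσ
          by_cases hj : (j:ℕ) < k + 1
          · rw [hzp j hj, hxp j hj] at h1
            simp at h1
          · simp only [if_neg hj] at h2
            simp at h2
        -- Step B : the whole subcube with prefix δ' lies in T
        have stepB : ∀ w : Fin m → Bool, (∀ i : Fin m, (i:ℕ) < k+1 → w i = δ' i) → w ∈ T := by
          intro w hw
          by_contra hwT
          have hcw := compl_in m hm T hT hmax w hwT
          refine stepA _ hcw (fun i hi => ?_)
          show (!(w i)) = (!(δ' (i:ℕ)))
          rw [hw i hi]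
        -- Step C : every member of T agrees with δ' somewhere in the prefix
        have stepC : ∀ z ∈ T, ∃ j : Fin m, (j:ℕ) < k+1 ∧ z j = δ' j := by
          intro z hz
          have huT : (fun i : Fin m => if (i:ℕ) < k+1 then δ' i else !(z i)) ∈ T :=
            stepB _ (by intro i hi; simp only [if_pos hi])
          have hvT : (fun i : Fin m => if (i:ℕ) < k+1 then δ' i else z i) ∈ T :=
            stepB _ (by intro i hi; simp only [if_pos hi])
          obtain ⟨j, h1, h2⟩ := hT z hz _ huT _ hvT
          by_cases hj : (j:ℕ) < k+1
          · refine ⟨j, hj, ?_⟩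
            rw [h1]
            show (if (j:ℕ) < k+1 then δ' (j:ℕ) else !(z j)) = δ' (j:ℕ)
            rw [if_pos hj]
          · exfalso
            simp only [if_neg hj] at h2
            simp at h2
        -- Step D : the twisted subcube lies in T
        have hD : ∀ w : Fin m → Bool,
            (∀ i : Fin m, (i:ℕ) < k+1 → w i = (if (i:ℕ) < k then !(δ' i) else δ' i)) →
            w ∈ T := by
          have hIH := IH hk (fun i => !(δ' i))
          have hsub : T.filter (fun x => ∀ i : Fin m, (i:ℕ) < k → x i = !(δ' i)) ⊆
              (univ : Finset (Fin m → Bool)).filter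
                (fun x => ∀ i : Fin m, (i:ℕ) < k+1 →
                  x i = (fun n : ℕ => if n < k then !(δ' n) else δ' n) i) := by
            intro z hz
            simp only [mem_filter, mem_univ, true_and] at *
            obtain ⟨hzT, hzp⟩ := hz
            intro i hi
            by_cases hik : (i:ℕ) < k
            · simp only [if_pos hik]
              exact hzp i hik
            · have hik' : (i:ℕ) = k :=
                Nat.le_antisymm (Nat.lt_succ_iff.mp hi) (Nat.not_lt.mp hik)
              simp only [hik', lt_irrefl, if_neg (lt_irrefl k)]
              obtain ⟨j, hj1, hj2⟩ := stepC z hzT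
              by_cases hjk : (j:ℕ) < k
              · rw [hzp j hjk] at hj2
                simp at hj2
              · have hjk' : (j:ℕ) = k :=
                  Nat.le_antisymm (Nat.lt_succ_iff.mp hj1) (Nat.not_lt.mp hjk)
                have hij : i = j := Fin.ext (hik'.trans hjk'.symm)
                rw [hij, hj2, hjk']
                simp
          have hCγcard : ((univ : Finset (Fin m → Bool)).filter
              (fun x => ∀ i : Fin m, (i:ℕ) < k+1 →
                x i = (fun n : ℕ => if n < k then !(δ' n) else δ' n) i)).card
              = 2 ^ (m - k - 1) := by
            rw [cube_card m (k+1) hkm (fun n : ℕ => if n < k then !(δ' n) else δ' n)]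
            congr 1
          have heq : T.filter (fun x => ∀ i : Fin m, (i:ℕ) < k → x i = !(δ' i)) =
              (univ : Finset (Fin m → Bool)).filter
                (fun x => ∀ i : Fin m, (i:ℕ) < k+1 →
                  x i = (fun n : ℕ => if n < k then !(δ' n) else δ' n) i) := by
            apply Finset.eq_of_subset_of_card_le hsub
            rw [hCγcard, hIH]
          intro w hw
          have hmem : w ∈ (univ : Finset (Fin m → Bool)).filter
              (fun x => ∀ i : Fin m, (i:ℕ) < k+1 →
                x i = (fun n : ℕ => if n < k then !(δ' n) else δ' n) i) := by
            simp only [mem_filter, mem_univ, true_and]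
            exact hw
          rw [← heq] at hmem
          exact (mem_filter.mp hmem).1
        -- Step E : every member of T has coordinate k equal to δ' k
        have stepE : ∀ z ∈ T, z ⟨k, hklt⟩ = δ' k := by
          intro z hz
          have huT : (fun i : Fin m => if (i:ℕ) < k+1 then δ' i else !(z i)) ∈ T :=
            stepB _ (by intro i hi; simp only [if_pos hi])
          have hvT : (fun i : Fin m =>
              if (i:ℕ) < k+1 then (if (i:ℕ) < k then !(δ' i) else δ' i) else !(z i)) ∈ T :=
            hD _ (by intro i hi; simp only [if_pos hi])
          obtain ⟨j, h1, h2⟩ := hT z hz _ huT _ hvT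
          by_cases hj : (j:ℕ) < k+1
          · by_cases hjk : (j:ℕ) < k
            · exfalso
              simp only [if_pos hj, if_pos hjk] at h2
              simp at h2
            · have hjeq : j = ⟨k, hklt⟩ :=
                Fin.ext (Nat.le_antisymm (Nat.lt_succ_iff.mp hj) (Nat.not_lt.mp hjk))
              rw [hjeq] at h1
              rw [h1]
              show (if k < k+1 then δ' k else !(z ⟨k, hklt⟩)) = δ' k
              rw [if_pos (Nat.lt_succ_self k)]
          · exfalso
            simp only [if_neg hj] at h1
            simp at h1
        -- Step F : T is a star, contradiction
        have hstar : T = (univ : Finset (Fin m → Bool)).filter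
            (fun x => x ⟨k, hklt⟩ = δ' k) := by
          apply Finset.eq_of_subset_of_card_le
          · intro z hz
            simp only [mem_filter, mem_univ, true_and]
            exact stepE z hz
          · rw [star_card m hm ⟨k, hklt⟩ (δ' k), hmax]
        exact hnotstar ⟨⟨k, hklt⟩, δ' k, hstar⟩
      -- the pairing bound
      have hmap : ∀ x ∈ T.filter (fun x => ∀ i : Fin m, (i:ℕ) < k+1 → x i = δ' i),
          (fun i : Fin m => if (i:ℕ) < k+1 then x i else !(x i)) ∈
            ((univ : Finset (Fin m → Bool)).filter
              (fun x => ∀ i : Fin m, (i:ℕ) < k+1 → x i = δ' i)) \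
            (T.filter (fun x => ∀ i : Fin m, (i:ℕ) < k+1 → x i = δ' i)) := by
        intro x hx
        rw [Finset.mem_sdiff]
        obtain ⟨hxT, hxp⟩ := mem_filter.mp hx
        constructor
        · simp only [mem_filter, mem_univ, true_and]
          intro i hi
          simp only [if_pos hi]
          exact hxp i hi
        · intro hmem
          exact hgood x hxT hxp (mem_filter.mp hmem).1
      have hinj : Set.InjOn
          (fun x : Fin m → Bool => fun i : Fin m => if (i:ℕ) < k+1 then x i else !(x i))
          (T.filter (fun x => ∀ i : Fin m, (i:ℕ) < k+1 → x i = δ' i)) := by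
        intro a _ b _ hab
        funext i
        have hco := congrFun hab i
        by_cases hi : (i:ℕ) < k+1 <;> simp only [if_pos, if_neg, hi, if_true, if_false] at hco
        · exact hco
        · simpa using hco
      have hle := Finset.card_le_card_of_injOn _ hmap hinj
      have hsd := Finset.card_sdiff_of_subset hSC
      have hle2 := Finset.card_le_card hSC
      rw [hsd, hCcard] at hle
      rw [hCcard] at hle2
      generalize hgen : (T.filter (fun x => ∀ i : Fin m, (i:ℕ) < k+1 → x i = δ' i)).card = A
        at hle hle2 ⊢
      clear * - hle hle2
      omega
    -- combine the two halves
    have hIHδ := IH hk δ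
    have hsplit : (T.filter (fun x => ∀ i : Fin m, (i:ℕ) < k → x i = δ i)) =
        (T.filter (fun x => ∀ i : Fin m, (i:ℕ) < k+1 → x i = δ i)) ∪
        (T.filter (fun x => ∀ i : Fin m, (i:ℕ) < k+1 →
          x i = (fun n : ℕ => if n = k then !(δ n) else δ n) i)) := by
      ext x
      simp only [mem_filter, mem_union]
      constructor
      · rintro ⟨hxT, hxp⟩
        by_cases hb : x ⟨k, hklt⟩ = δ k
        · left
          refine ⟨hxT, fun i hi => ?_⟩
          by_cases hik : (i:ℕ) < k
          · exact hxp i hik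
          · have hieq : i = ⟨k, hklt⟩ :=
              Fin.ext (Nat.le_antisymm (Nat.lt_succ_iff.mp hi) (Nat.not_lt.mp hik))
            rw [hieq]
            exact hb
        · right
          refine ⟨hxT, fun i hi => ?_⟩
          by_cases hik : (i:ℕ) < k
          · simp only [if_neg (Nat.ne_of_lt hik)]
            exact hxp i hik
          · have hieq : i = ⟨k, hklt⟩ :=
              Fin.ext (Nat.le_antisymm (Nat.lt_succ_iff.mp hi) (Nat.not_lt.mp hik))
            rw [hieq]
            simp only [if_pos rfl]
            revert hb
            rw [hieq] at *
            cases hxk : x ⟨k, hklt⟩ <;> cases hδk : δ k <;> simp_all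
      · rintro (⟨hxT, hxp⟩ | ⟨hxT, hxp⟩)
        · exact ⟨hxT, fun i hi => hxp i (Nat.lt_succ_of_lt hi)⟩
        · refine ⟨hxT, fun i hi => ?_⟩
          have := hxp i (Nat.lt_succ_of_lt hi)
          rw [this]
          simp only [if_neg (Nat.ne_of_lt hi)]
    have hdisj2 : Disjoint (T.filter (fun x => ∀ i : Fin m, (i:ℕ) < k+1 → x i = δ i))
        (T.filter (fun x => ∀ i : Fin m, (i:ℕ) < k+1 →
          x i = (fun n : ℕ => if n = k then !(δ n) else δ n) i)) := by
      rw [Finset.disjoint_left]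
      intro x h1 h2
      have a1 := (mem_filter.mp h1).2 ⟨k, hklt⟩ (Nat.lt_succ_self k)
      have a2 := (mem_filter.mp h2).2 ⟨k, hklt⟩ (Nat.lt_succ_self k)
      rw [a1] at a2
      simp at a2
    have hcards := congrArg Finset.card hsplit
    rw [Finset.card_union_of_disjoint hdisj2, hIHδ] at hcards
    have b1 := key δ
    have b2 := key (fun n : ℕ => if n = k then !(δ n) else δ n)
    have hpow : (2:ℕ) ^ (m - k - 1) = 2 ^ (m - k - 2) + 2 ^ (m - k - 2) := by
      have h1 : m - k - 1 = (m - k - 2) + 1 := by clear * - hk1 hm; omega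
      rw [h1, pow_succ, mul_two]
    have hgoal : m - (k+1) - 1 = m - k - 2 := by clear * - hk1 hm; omega
    rw [hgoal]
    generalize hA : (T.filter (fun x => ∀ i : Fin m, (i:ℕ) < k+1 → x i = δ i)).card = A
      at b1 hcards ⊢
    generalize hB : (T.filter (fun x => ∀ i : Fin m, (i:ℕ) < k+1 →
        x i = (fun n : ℕ => if n = k then !(δ n) else δ n) i)).card = B at b2 hcards
    clear * - b1 b2 hcards hpow
    omega

theorem stmt_5 (m : ℕ) (hm : 1 ≤ m) (T : Finset (Fin m → Bool))
    (hT : ∀ x ∈ T, ∀ y ∈ T, ∀ z ∈ T, ∃ j : Fin m, x j = y j ∧ y j = z j)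
    (hmax : T.card = 2 ^ (m - 1))
    (hnotstar : ¬ ∃ (j : Fin m) (u : Bool),
      T = Finset.univ.filter (fun x : Fin m → Bool => x j = u))
    (k : ℕ) (hk : k ≤ m - 1) (δ : Fin k → Bool) :
    (T.filter (fun x => ∀ i : Fin k,
        x (Fin.castLE (le_trans hk (Nat.sub_le m 1)) i) = δ i)).card = 2 ^ (m - k - 1) := by
  classical
  have hfe : T.filter (fun x => ∀ i : Fin k,
        x (Fin.castLE (le_trans hk (Nat.sub_le m 1)) i) = δ i)
      = T.filter (fun x => ∀ i : Fin m, (i:ℕ) < k →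
          x i = (fun n : ℕ => if h : n < k then δ ⟨n, h⟩ else false) (i:ℕ)) := by
    apply Finset.filter_congr
    intro x _
    simp only
    constructor
    · intro h i hi
      rw [dif_pos hi]
      have h2 := h ⟨(i:ℕ), hi⟩
      have h3 : Fin.castLE (le_trans hk (Nat.sub_le m 1)) (⟨(i:ℕ), hi⟩ : Fin k) = i :=
        Fin.ext rfl
      rw [h3] at h2
      exact h2
    · intro h i
      have hlt : ((Fin.castLE (le_trans hk (Nat.sub_le m 1)) i : Fin m) : ℕ) < k := i.isLt
      have h2 := h _ hlt
      rw [dif_pos hlt] at h2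
      rw [h2]
      congr 1
  rw [hfe]
  exact aux m hm T hT hmax hnotstar k hk
    (fun n : ℕ => if h : n < k then δ ⟨n, h⟩ else false)
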